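/- Localization completeness for Pareto-optimal repairs (second direction): let B_r = R_s(B) be the strong reachability closure of B ⊆ D. If R is a Pareto-optimal repair of the restricted KB on B_r, then there exists a Pareto-optimal repair R' of the full KB such that R = R' ∩ B_r. -/

import Mathlib

variable {α : Type*}

def DownwardClosed (Cons : Set (Set α)) : Prop :=
  ∀ S ∈ Cons, ∀ S' ⊆ S, S' ∈ Cons

def IsConflict (D : Set α) (Cons : Set (Set α)) (C : Set α) : Prop :=
  C ⊆ D ∧ C ∉ Cons ∧ ∀ C' ⊂ C, C' ∈ Cons

def IsRepair (D : Set α) (Cons : Set (Set α)) (R : Set α) : Prop :=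
  R ⊆ D ∧ R ∈ Cons ∧ ∀ S, S ⊆ D → S ∈ Cons → R ⊆ S → S = R

def Acyclic (pr : α → α → Prop) : Prop :=
  ∀ a, ¬ Relation.TransGen pr a a

def PriorityRel (D : Set α) (Cons : Set (Set α)) (pr : α → α → Prop) : Prop :=
  Acyclic pr ∧ ∀ a b, pr a b → ∃ C, IsConflict D Cons C ∧ a ∈ C ∧ b ∈ C

def ParetoImp (Cons : Set (Set α)) (pr : α → α → Prop) (D R B : Set α) : Prop :=
  B ⊆ D ∧ B ∈ Cons ∧ ∃ β ∈ B \ R, ∀ a ∈ R \ B, pr β a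

def GlobalImp (Cons : Set (Set α)) (pr : α → α → Prop) (D R B : Set α) : Prop :=
  B ⊆ D ∧ B ∈ Cons ∧ B ≠ R ∧ ∀ a ∈ R \ B, ∃ β ∈ B \ R, pr β a

def ParetoOpt (Cons : Set (Set α)) (pr : α → α → Prop) (D R : Set α) : Prop :=
  IsRepair D Cons R ∧ ∀ B, ¬ ParetoImp Cons pr D R B

def GlobalOpt (Cons : Set (Set α)) (pr : α → α → Prop) (D R : Set α) : Prop :=
  IsRepair D Cons R ∧ ∀ B, ¬ GlobalImp Cons pr D R B

def TotalPrio (D : Set α) (Cons : Set (Set α)) (pr : α → α → Prop) : Prop :=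
  ∀ a b, a ≠ b → (∃ C, IsConflict D Cons C ∧ a ∈ C ∧ b ∈ C) → pr a b ∨ pr b a

def IsCompletion (D : Set α) (Cons : Set (Set α)) (pr pr' : α → α → Prop) : Prop :=
  PriorityRel D Cons pr' ∧ TotalPrio D Cons pr' ∧ ∀ a b, pr a b → pr' a b

def ComplOpt (Cons : Set (Set α)) (pr : α → α → Prop) (D R : Set α) : Prop :=
  ∃ pr', IsCompletion D Cons pr pr' ∧ GlobalOpt Cons pr' D R

/-- Strong reachability: the least superset of `B` closed under the rule: if α is
reachable, C is a conflict containing α, and α is ≻-minimal in C, then every element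
of C is reachable. -/
inductive StrongReach (Confl : Set (Set α)) (pr : α → α → Prop) (B : Set α) : α → Prop
  | base {a : α} : a ∈ B → StrongReach Confl pr B a
  | step {b a : α} {C : Set α} : StrongReach Confl pr B b → C ∈ Confl → b ∈ C →
      (∀ β ∈ C, ¬ pr b β) → a ∈ C → StrongReach Confl pr B a

private lemma exists_conflict_of_incons {α : Type*} {D : Set α} (hD : D.Finite)
    {Cons : Set (Set α)} {T : Set α} (hTD : T ⊆ D) (hT : T ∉ Cons) :
    ∃ C, C ⊆ T ∧ IsConflict D Cons C := by
  classical
  have hTfin : T.Finite := hD.subset hTD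
  set F := hTfin.toFinset with hF
  have hFT : (F : Set α) = T := hTfin.coe_toFinset
  set S : Finset (Finset α) := F.powerset.filter (fun C => (C : Set α) ∉ Cons) with hS
  have hne : S.Nonempty := ⟨F, by simp [hS, hFT, hT]⟩
  obtain ⟨C, hCS, hmin⟩ := Finset.exists_min_image S Finset.card hne
  rw [hS, Finset.mem_filter, Finset.mem_powerset] at hCS
  obtain ⟨hCF, hCc⟩ := hCS
  have hCT : (C : Set α) ⊆ T := by
    rw [← hFT]; exact Finset.coe_subset.mpr hCF
  refine ⟨C, hCT, hCT.trans hTD, hCc, ?_⟩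
  intro C' hC'
  by_contra hC'c
  have hC'fin : C'.Finite := C.finite_toSet.subset hC'.1
  have hF'C : hC'fin.toFinset ⊂ C := by
    rw [← Finset.coe_ssubset, hC'fin.coe_toFinset]
    exact hC'
  have hF'S : hC'fin.toFinset ∈ S := by
    rw [hS, Finset.mem_filter, Finset.mem_powerset]
    exact ⟨hF'C.1.trans hCF, by rw [hC'fin.coe_toFinset]; exact hC'c⟩
  exact absurd (Finset.card_lt_card hF'C) (not_lt.mpr (hmin _ hF'S))

/-- Localization completeness for Pareto-optimal repairs (second direction): if `R` is a
Pareto-optimal repair of the KB restricted to the strong reachability closure `B_r` of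
`B ⊆ D`, then there is a Pareto-optimal repair `R'` of the full KB with `R = R' ∩ B_r`. -/
theorem paretoOpt_localization_complete
    (D : Set α) (hD : D.Finite) (Cons : Set (Set α))
    (hdc : DownwardClosed Cons) (hempty : (∅ : Set α) ∈ Cons)
    (hsing : ∀ a ∈ D, ({a} : Set α) ∈ Cons)
    (pr : α → α → Prop) (hpr : PriorityRel D Cons pr)
    (B : Set α) (hB : B ⊆ D) (R : Set α)
    (hR : ParetoOpt (fun S => S ∈ Cons ∧ S ⊆ {a | StrongReach {C | IsConflict D Cons C} pr B a})
      (fun a b => pr a b ∧ a ∈ {x | StrongReach {C | IsConflict D Cons C} pr B x}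
        ∧ b ∈ {x | StrongReach {C | IsConflict D Cons C} pr B x})
      {a | StrongReach {C | IsConflict D Cons C} pr B a} R) :
    ∃ R', ParetoOpt Cons pr D R' ∧
      R = R' ∩ {a | StrongReach {C | IsConflict D Cons C} pr B a} := by
    classical
  obtain ⟨hacyc, hprC⟩ := hpr
  set Br : Set α := {a | StrongReach {C | IsConflict D Cons C} pr B a} with hBrdef
  obtain ⟨⟨hRBr, ⟨hRcons, hRsub⟩, hRmax⟩, hRpar⟩ := hR
  -- Br ⊆ D
  have hBrD : Br ⊆ D := by
    intro a ha
    have ha' : StrongReach {C | IsConflict D Cons C} pr B a := ha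
    induction ha' with
    | base h => exact hB h
    | step _ hC _ _ haC _ => exact hC.1 haC
  -- a rank function compatible with pr
  set rank : α → ℕ := fun x => (hD.toFinset.filter (fun z => Relation.TransGen pr z x)).card
    with hrank
  have hranklt : ∀ {a b : α}, pr a b → rank a < rank b := by
    intro a b hab
    have haD : a ∈ D := by
      obtain ⟨C, hC, haC, _⟩ := hprC a b hab; exact hC.1 haC
    have hss : hD.toFinset.filter (fun z => Relation.TransGen pr z a) ⊂
        hD.toFinset.filter (fun z => Relation.TransGen pr z b) := by
      constructor
      · intro z hz
        rw [Finset.mem_filter] at hz ⊢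
        exact ⟨hz.1, hz.2.tail hab⟩
      · intro hsub
        have hmem : a ∈ hD.toFinset.filter (fun z => Relation.TransGen pr z b) := by
          rw [Finset.mem_filter]
          exact ⟨hD.mem_toFinset.mpr haD, Relation.TransGen.single hab⟩
        have := hsub hmem
        rw [Finset.mem_filter] at this
        exact hacyc a this.2
    exact Finset.card_lt_card hss
  -- a sorted enumeration of D
  set l : List α := hD.toFinset.toList.mergeSort (fun x y => decide (rank x ≤ rank y)) with hl
  have hmeml : ∀ x, x ∈ l ↔ x ∈ D := by
    intro x
    rw [hl, List.mem_mergeSort, Finset.mem_toList, Set.Finite.mem_toFinset]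
  have hpw : List.Pairwise (fun x y => ¬ pr y x) l := by
    have hs := List.pairwise_mergeSort (le := fun x y => decide (rank x ≤ rank y))
      (fun a b c hab hbc => by simp only [decide_eq_true_eq] at *; omega)
      (fun a b => by simp only [Bool.or_eq_true, decide_eq_true_eq]; omega)
      hD.toFinset.toList
    refine hs.imp (fun {x y} h hyx => ?_)
    simp only [decide_eq_true_eq] at h
    exact absurd (hranklt hyx) (not_lt.mpr h)
  -- the greedy step function
  set F : Set α → α → Set α :=
    fun T a => if a ∉ Br \ R ∧ insert a T ∈ Cons then insert a T else T with hFdef'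
  have hFdef : ∀ T a, F T a = if a ∉ Br \ R ∧ insert a T ∈ Cons then insert a T else T :=
    fun T a => by rw [hFdef']
  -- the main greedy invariant lemma
  have key : ∀ (l' : List α) (S : Set α),
      (∀ x ∈ l', x ∈ D) →
      List.Pairwise (fun x y => ¬ pr y x) l' →
      S ∈ Cons → S ⊆ D → S ∩ Br ⊆ R →
      (∀ γ ∈ S, ∀ b ∈ l', ¬ pr b γ) →
      S ⊆ l'.foldl F S ∧
      l'.foldl F S ∈ Cons ∧
      l'.foldl F S ⊆ D ∧
      l'.foldl F S ∩ Br ⊆ R ∧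
      (∀ a ∈ l', a ∈ R → a ∈ l'.foldl F S) ∧
      (∀ a ∈ l', a ∉ Br \ R → insert a (l'.foldl F S) ∈ Cons → a ∈ l'.foldl F S) ∧
      (∀ β ∈ l', β ∉ Br \ R → β ∉ l'.foldl F S →
        ∃ C, IsConflict D Cons C ∧ β ∈ C ∧ C \ {β} ⊆ l'.foldl F S ∧ ∀ γ ∈ C, ¬ pr β γ) := by
    intro l'
    induction l' with
    | nil =>
      intro S _ _ hS1 hSD hSBr _
      exact ⟨subset_rfl, hS1, hSD, hSBr, by simp, by simp, by simp⟩
    | cons a t ih =>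
      intro S hmem hpw' hS1 hSD hSBr hH
      have haD : a ∈ D := hmem a (List.mem_cons_self (a := a) (l := t))
      have hpwa : ∀ b ∈ t, ¬ pr b a := (List.pairwise_cons.mp hpw').1
      have hpwt : List.Pairwise (fun x y => ¬ pr y x) t := (List.pairwise_cons.mp hpw').2
      -- the minimal conflict extraction when `insert a S` is inconsistent
      have hconf : insert a S ∉ Cons →
          ∃ C, IsConflict D Cons C ∧ a ∈ C ∧ C \ {a} ⊆ S ∧ ∀ γ ∈ C, ¬ pr a γ := by
        intro hnc
        obtain ⟨C, hCs, hCc⟩ := exists_conflict_of_incons hD (Set.insert_subset haD hSD) hnc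
        have haC : a ∈ C := by
          by_contra haC
          have hCS : C ⊆ S := by
            intro x hx
            rcases hCs hx with rfl | hx'
            · exact absurd hx haC
            · exact hx'
          exact hCc.2.1 (hdc S hS1 C hCS)
        have hCSa : C \ {a} ⊆ S := by
          intro x hx
          rcases hCs hx.1 with rfl | hx'
          · exact absurd rfl hx.2
          · exact hx'
        refine ⟨C, hCc, haC, hCSa, ?_⟩
        intro γ hγ hprγ
        by_cases hγa : γ = a
        · rw [hγa] at hprγ; exact hacyc a (Relation.TransGen.single hprγ)
        · exact hH γ (hCSa ⟨hγ, hγa⟩) a (List.mem_cons_self (a := a) (l := t)) hprγ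
      -- properties of the new accumulator
      have hSS' : S ⊆ F S a := by
        rw [hFdef]
        split_ifs with h
        · exact Set.subset_insert a S
        · exact subset_rfl
      have hS'1 : F S a ∈ Cons := by
        rw [hFdef]; split_ifs with h
        · exact h.2
        · exact hS1
      have hS'D : F S a ⊆ D := by
        rw [hFdef]; split_ifs with h
        · exact Set.insert_subset haD hSD
        · exact hSD
      have hS'Br : F S a ∩ Br ⊆ R := by
        rw [hFdef]; split_ifs with h
        · intro x hx
          rcases hx.1 with rfl | hx'
          · by_contra hxR
            exact h.1 ⟨hx.2, hxR⟩
          · exact hSBr ⟨hx', hx.2⟩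
        · exact hSBr
      have hH' : ∀ γ ∈ F S a, ∀ b ∈ t, ¬ pr b γ := by
        intro γ hγ b hb
        have hγ' : γ ∈ insert a S ∨ γ ∈ S := by
          rw [hFdef] at hγ; split_ifs at hγ with h
          · exact Or.inl hγ
          · exact Or.inr hγ
        rcases hγ' with hγ' | hγ'
        · rcases hγ' with rfl | hγ'
          · exact hpwa b hb
          · exact hH γ hγ' b (List.mem_cons_of_mem a hb)
        · exact hH γ hγ' b (List.mem_cons_of_mem a hb)
      have hIH := ih (F S a) (fun x hx => hmem x (List.mem_cons_of_mem a hx))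
        hpwt hS'1 hS'D hS'Br hH'
      rw [List.foldl_cons]
      refine ⟨hSS'.trans hIH.1, hIH.2.1, hIH.2.2.1, hIH.2.2.2.1, ?_, ?_, ?_⟩
      · -- forced addition of R elements
        intro a' ha' ha'R
        rcases List.mem_cons.mp ha' with rfl | ha''
        · -- a' = a'' : show the branch is taken
          have hins : insert a' S ∈ Cons := by
            by_contra hnc
            obtain ⟨C, hCc, haC, hCSa, hCmin⟩ := hconf hnc
            have haBr : a' ∈ Br := hRBr ha'R
            have hCBr : C ⊆ Br := fun γ hγ => StrongReach.step haBr hCc haC hCmin hγ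
            have hCR : C ⊆ R := by
              intro γ hγ
              by_cases hγa : γ = a'
              · exact hγa ▸ ha'R
              · exact hSBr ⟨hCSa ⟨hγ, hγa⟩, hCBr hγ⟩
            exact hCc.2.1 (hdc R hRcons C hCR)
          have : F S a' = insert a' S := by
            rw [hFdef]
            exact if_pos ⟨fun h => h.2 ha'R, hins⟩
          exact hIH.1 (this ▸ Set.mem_insert a' S)
        · exact hIH.2.2.2.2.1 a' ha'' ha'R
      · -- greedy maximality
        intro a' ha' ha'skip hins
        rcases List.mem_cons.mp ha' with rfl | ha''
        · by_cases hc : a' ∉ Br \ R ∧ insert a' S ∈ Cons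
          · have : F S a' = insert a' S := by rw [hFdef]; exact if_pos hc
            exact hIH.1 (this ▸ Set.mem_insert a' S)
          · exfalso
            apply hc
            refine ⟨ha'skip, ?_⟩
            exact hdc _ hins _ (Set.insert_subset_insert (hSS'.trans hIH.1))
        · exact hIH.2.2.2.2.2.1 a' ha'' ha'skip hins
      · -- conflict witness for skipped elements
        intro β hβ hβskip hβG
        rcases List.mem_cons.mp hβ with rfl | hβ'
        · have hnc : insert β S ∉ Cons := by
            intro hc
            have : F S β = insert β S := by rw [hFdef]; exact if_pos ⟨hβskip, hc⟩
            exact hβG (hIH.1 (this ▸ Set.mem_insert β S))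
          obtain ⟨C, hCc, hβC, hCSβ, hCmin⟩ := hconf hnc
          exact ⟨C, hCc, hβC, hCSβ.trans (hSS'.trans hIH.1), hCmin⟩
        · exact hIH.2.2.2.2.2.2 β hβ' hβskip hβG
  -- apply the key lemma
  obtain ⟨-, hGcons, hGD, hGBr, hGR', hGmax, hGconf⟩ :=
    key l ∅ (fun x hx => (hmeml x).1 hx) hpw hempty (Set.empty_subset D)
      (by simp) (by simp)
  set G : Set α := l.foldl F ∅ with hGdef
  have hRG : R ⊆ G := fun r hr => hGR' r ((hmeml r).2 (hBrD (hRBr hr))) hr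
  refine ⟨G, ⟨⟨hGD, hGcons, ?_⟩, ?_⟩, ?_⟩
  · -- maximality of G in D
    intro S hSD hScons hGS
    apply Set.Subset.antisymm _ hGS
    intro x hxS
    by_contra hxG
    have hxD := hSD hxS
    have hins : insert x G ∈ Cons := hdc S hScons _ (Set.insert_subset hxS hGS)
    by_cases hxskip : x ∈ Br \ R
    · have h1 : insert x R ∈ Cons := hdc _ hins _ (Set.insert_subset_insert hRG)
      have h2 : insert x R ⊆ Br := Set.insert_subset hxskip.1 hRBr
      have h3 := hRmax (insert x R) h2 ⟨h1, h2⟩ (Set.subset_insert x R)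
      exact hxskip.2 (h3 ▸ Set.mem_insert x R)
    · exact hxG (hGmax x ((hmeml x).2 hxD) hxskip hins)
  · -- Pareto optimality of G
    rintro B' ⟨hB'D, hB'c, β, hβ, hdom⟩
    by_cases hβskip : β ∈ Br \ R
    · -- build a Pareto improvement of R in the restricted KB
      apply hRpar ((B' ∩ G ∩ Br) ∪ {β})
      have hsubBr : (B' ∩ G ∩ Br) ∪ {β} ⊆ Br := by
        intro x hx
        rcases hx with hx | hx
        · exact hx.2
        · rw [Set.mem_singleton_iff] at hx; exact hx ▸ hβskip.1
      have hsubB' : (B' ∩ G ∩ Br) ∪ {β} ⊆ B' := by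
        intro x hx
        rcases hx with hx | hx
        · exact hx.1.1
        · rw [Set.mem_singleton_iff] at hx; exact hx ▸ hβ.1
      refine ⟨hsubBr, ⟨hdc B' hB'c _ hsubB', hsubBr⟩,
        β, ⟨Set.mem_union_right _ rfl, hβskip.2⟩, ?_⟩
      intro a ha
      have haG : a ∈ G := hRG ha.1
      have haBr : a ∈ Br := hRBr ha.1
      have haB' : a ∉ B' := by
        intro haB'
        exact ha.2 (Set.mem_union_left _ ⟨⟨haB', haG⟩, haBr⟩)
      exact ⟨hdom a ⟨haG, haB'⟩, hβskip.1, haBr⟩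
    · -- use the conflict witness
      have hβD : β ∈ D := hB'D hβ.1
      obtain ⟨C, hCc, hβC, hCG, hCmin⟩ := hGconf β ((hmeml β).2 hβD) hβskip hβ.2
      have hnotsub : ¬ C ⊆ B' := fun h => hCc.2.1 (hdc B' hB'c C h)
      obtain ⟨γ, hγC, hγB'⟩ := Set.not_subset.mp hnotsub
      have hγβ : γ ≠ β := fun h => hγB' (h ▸ hβ.1)
      have hγG : γ ∈ G := hCG ⟨hγC, hγβ⟩
      exact hCmin γ hγC (hdom γ ⟨hγG, hγB'⟩)
  · exact Set.Subset.antisymm (Set.subset_inter hRG hRBr) hGBr
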